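/- Let Ψ > 0 and fix y ∈ ℝ. For every x ∈ ℝ, the function x ↦ arctan(x·y/(Ψ·√(Ψ² + x² + y²))) is differentiable at x with derivative Ψ·y/((Ψ² + x²)·√(Ψ² + x² + y²)). -/

import Mathlib

open Real

theorem stmt_4 (Ψ y : ℝ) (hΨ : 0 < Ψ) (x : ℝ) :
    HasDerivAt
      (fun x : ℝ => Real.arctan (x * y / (Ψ * Real.sqrt (Ψ ^ 2 + x ^ 2 + y ^ 2))))
      (Ψ * y / ((Ψ ^ 2 + x ^ 2) * Real.sqrt (Ψ ^ 2 + x ^ 2 + y ^ 2))) x := by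
  have hA : 0 < Ψ ^ 2 + x ^ 2 + y ^ 2 := by positivity
  set S := Real.sqrt (Ψ ^ 2 + x ^ 2 + y ^ 2) with hSdef
  have hS : 0 < S := Real.sqrt_pos.mpr hA
  have hS2 : S ^ 2 = Ψ ^ 2 + x ^ 2 + y ^ 2 := Real.sq_sqrt hA.le
  -- derivative of inner argument
  have hinner : HasDerivAt (fun x : ℝ => Ψ ^ 2 + x ^ 2 + y ^ 2) (2 * x) x := by
    have : HasDerivAt (fun x : ℝ => x ^ 2) (2 * x) x := by
      simpa using hasDerivAt_pow 2 x
    simpa using ((this.const_add (Ψ ^ 2)).add_const (y ^ 2))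
  have hsqrt : HasDerivAt (fun x : ℝ => Real.sqrt (Ψ ^ 2 + x ^ 2 + y ^ 2))
      (2 * x / (2 * S)) x := hinner.sqrt hA.ne'
  have hden : HasDerivAt (fun x : ℝ => Ψ * Real.sqrt (Ψ ^ 2 + x ^ 2 + y ^ 2))
      (Ψ * (2 * x / (2 * S))) x := hsqrt.const_mul Ψ
  have hnum : HasDerivAt (fun x : ℝ => x * y) y x := by
    simpa using (hasDerivAt_id x).mul_const y
  have hdne : Ψ * S ≠ 0 := by positivity
  have hdiv : HasDerivAt (fun x : ℝ => x * y / (Ψ * Real.sqrt (Ψ ^ 2 + x ^ 2 + y ^ 2)))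
      ((y * (Ψ * S) - x * y * (Ψ * (2 * x / (2 * S)))) / (Ψ * S) ^ 2) x :=
    hnum.div hden hdne
  have harctan := hdiv.arctan
  convert harctan using 1
  have h1 : 1 + (x * y / (Ψ * S)) ^ 2 = ((Ψ ^ 2 + x ^ 2) * (Ψ ^ 2 + y ^ 2)) / (Ψ * S) ^ 2 := by
    field_simp
    nlinarith [hS2]
  rw [h1]
  have hx2 : (0:ℝ) < Ψ ^ 2 + x ^ 2 := by positivity
  have hy2 : (0:ℝ) < Ψ ^ 2 + y ^ 2 := by positivity
  field_simp
  linear_combination (-y) * hS2
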